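/- Let n ≥ 1, let f : 2^[n] → ℝ be submodular, let x ∈ [0,1]^n, and let π be a sorting permutation for x with associated maximal chain B_0 ⊂ B_1 ⊂ ⋯ ⊂ B_n. Then the greedy vector g of f at π is a subgradient of the Lovasz extension f̂ at x: for all y ∈ [0,1]^n, f̂(y) ≥ f̂(x) + ⟨g, y − x⟩. -/

import Mathlib

/-- A set function `f : 2^[n] → ℝ` is submodular. -/
def Submodular {n : ℕ} (f : Finset (Fin n) → ℝ) : Prop :=
  ∀ S' S : Finset (Fin n), S' ⊆ S → ∀ i ∉ S,
    f (insert i S) - f S ≤ f (insert i S') - f S'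

/-- The Lovasz extension `f̂(x) = ∫₀¹ f({i : x_i ≥ τ}) dτ`. -/
noncomputable def lovasz {n : ℕ} (f : Finset (Fin n) → ℝ) (x : Fin n → ℝ) : ℝ :=
  ∫ τ in (0:ℝ)..(1:ℝ), f (Finset.univ.filter (fun i => τ ≤ x i))

/-- The maximal chain associated with a permutation `π` of `[n]` (1-indexed:
`B i = {j : π(j) ≤ i}`, encoded with the 0-indexed `Fin n`-valued `π` as
`B i = {j : (π j : ℕ) < i}` for `i = 0, 1, …, n`). -/
def chainSet {n : ℕ} (π : Equiv.Perm (Fin n)) (i : ℕ) : Finset (Fin n) :=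
  Finset.univ.filter (fun j => (π j : ℕ) < i)

section helpers

variable {n : ℕ} {f : Finset (Fin n) → ℝ} {π : Equiv.Perm (Fin n)} {g : Fin n → ℝ}

lemma mem_chainSet {j : Fin n} {k : ℕ} : j ∈ chainSet π k ↔ (π j : ℕ) < k := by
  simp [chainSet]

lemma chainSet_succ (j : Fin n) :
    chainSet π ((π j : ℕ) + 1) = insert j (chainSet π (π j : ℕ)) := by
  ext i
  simp only [mem_chainSet, Finset.mem_insert]
  constructor
  · intro h
    rcases Nat.lt_succ_iff_lt_or_eq.1 h with h | h
    · exact Or.inr h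
    · exact Or.inl (π.injective (Fin.ext h))
  · rintro (rfl | h)
    · exact Nat.lt_succ_self _
    · exact h.trans (Nat.lt_succ_self _)

lemma step_le (hf : Submodular f)
    (hg : ∀ j, g j = f (chainSet π ((π j : ℕ) + 1)) - f (chainSet π (π j : ℕ)))
    (S : Finset (Fin n)) (j : Fin n) :
    (if j ∈ S then g j else 0) ≤
      f (S ∩ chainSet π ((π j : ℕ) + 1)) - f (S ∩ chainSet π (π j : ℕ)) := by
  have hjB : j ∉ chainSet π (π j : ℕ) := by simp [mem_chainSet]
  rw [chainSet_succ]
  by_cases hj : j ∈ S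
  · rw [if_pos hj, Finset.inter_insert_of_mem hj, hg j, chainSet_succ]
    exact hf (S ∩ chainSet π (π j : ℕ)) (chainSet π (π j : ℕ)) Finset.inter_subset_right j hjB
  · rw [if_neg hj, Finset.inter_insert_of_notMem hj, sub_self]

lemma step_eq
    (hg : ∀ j, g j = f (chainSet π ((π j : ℕ) + 1)) - f (chainSet π (π j : ℕ)))
    (S : Finset (Fin n)) (hdc : ∀ j ∈ S, ∀ i, π i ≤ π j → i ∈ S) (j : Fin n) :
    (if j ∈ S then g j else 0) =
      f (S ∩ chainSet π ((π j : ℕ) + 1)) - f (S ∩ chainSet π (π j : ℕ)) := by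
  by_cases hj : j ∈ S
  · have hsub : chainSet π (π j : ℕ) ⊆ S := fun i hi =>
      hdc j hj i (Fin.le_def.2 (le_of_lt (mem_chainSet.1 hi)))
    have h1 : S ∩ chainSet π (π j : ℕ) = chainSet π (π j : ℕ) := Finset.inter_eq_right.2 hsub
    have hsub2 : chainSet π ((π j : ℕ) + 1) ⊆ S := by
      rw [chainSet_succ]; exact Finset.insert_subset hj hsub
    have h2 : S ∩ chainSet π ((π j : ℕ) + 1) = chainSet π ((π j : ℕ) + 1) :=
      Finset.inter_eq_right.2 hsub2
    rw [if_pos hj, h1, h2, hg j]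
  · rw [if_neg hj, chainSet_succ, Finset.inter_insert_of_notMem hj, sub_self]

lemma tele (f : Finset (Fin n) → ℝ) (π : Equiv.Perm (Fin n)) (S : Finset (Fin n)) :
    ∑ j : Fin n, (f (S ∩ chainSet π ((π j : ℕ) + 1)) - f (S ∩ chainSet π (π j : ℕ)))
      = f S - f ∅ := by
  have h1 : ∑ j : Fin n, (f (S ∩ chainSet π ((π j : ℕ) + 1)) - f (S ∩ chainSet π (π j : ℕ)))
      = ∑ i : Fin n, (f (S ∩ chainSet π ((i : ℕ) + 1)) - f (S ∩ chainSet π (i : ℕ))) :=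
    Equiv.sum_comp π (fun i : Fin n => f (S ∩ chainSet π ((i : ℕ) + 1)) - f (S ∩ chainSet π (i : ℕ)))
  rw [h1, Fin.sum_univ_eq_sum_range (fun k => f (S ∩ chainSet π (k + 1)) - f (S ∩ chainSet π k)) n,
    Finset.sum_range_sub (fun k => f (S ∩ chainSet π k))]
  have hn' : S ∩ chainSet π n = S :=
    Finset.inter_eq_left.2 (fun j _ => mem_chainSet.2 (π j).isLt)
  have h0 : S ∩ chainSet π 0 = ∅ := by
    have : chainSet π 0 = ∅ := by
      ext i; simp [mem_chainSet]
    rw [this, Finset.inter_empty]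
  rw [hn', h0]

lemma sum_ite_mem_eq (S : Finset (Fin n)) (g : Fin n → ℝ) :
    ∑ j : Fin n, (if j ∈ S then g j else 0) = ∑ j ∈ S, g j := by
  rw [Finset.sum_ite_mem, Finset.univ_inter]

lemma sum_g_le (hf : Submodular f)
    (hg : ∀ j, g j = f (chainSet π ((π j : ℕ) + 1)) - f (chainSet π (π j : ℕ)))
    (S : Finset (Fin n)) :
    f ∅ + ∑ j ∈ S, g j ≤ f S := by
  have h := Finset.sum_le_sum (fun j (_ : j ∈ Finset.univ) => step_le hf hg S j)
  rw [sum_ite_mem_eq, tele f π S] at h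
  linarith

lemma sum_g_eq
    (hg : ∀ j, g j = f (chainSet π ((π j : ℕ) + 1)) - f (chainSet π (π j : ℕ)))
    (S : Finset (Fin n)) (hdc : ∀ j ∈ S, ∀ i, π i ≤ π j → i ∈ S) :
    f ∅ + ∑ j ∈ S, g j = f S := by
  have h := Finset.sum_congr rfl (fun j (_ : j ∈ Finset.univ) => step_eq hg S hdc j)
  rw [sum_ite_mem_eq, tele f π S] at h
  linarith

end helpers

section intpart
variable {n : ℕ}

lemma intervalIntegrable_indicator_const {A : Set ℝ} (hA : MeasurableSet A) (c : ℝ) :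
    IntervalIntegrable (A.indicator fun _ => c) MeasureTheory.volume 0 1 := by
  rw [intervalIntegrable_iff]
  apply MeasureTheory.Integrable.indicator _ hA
  refine MeasureTheory.integrableOn_const ?_
  rw [Set.uIoc_of_le (by norm_num : (0:ℝ) ≤ 1)]
  exact measure_Ioc_lt_top.ne

lemma measurable_levelSet (z : Fin n → ℝ) (S : Finset (Fin n)) :
    MeasurableSet {t : ℝ | Finset.univ.filter (fun i => t ≤ z i) = S} := by
  have h : {t : ℝ | Finset.univ.filter (fun i => t ≤ z i) = S}
      = ⋂ i, {t : ℝ | t ≤ z i ↔ i ∈ S} := by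
    ext t
    simp [Finset.ext_iff, Set.mem_iInter]
  rw [h]
  refine MeasurableSet.iInter fun i => ?_
  by_cases hi : i ∈ S
  · simp only [hi, iff_true]
    exact measurableSet_Iic
  · simp only [hi, iff_false, not_le]
    exact measurableSet_Ioi

lemma intervalIntegrable_F (f : Finset (Fin n) → ℝ) (z : Fin n → ℝ) :
    IntervalIntegrable (fun τ => f (Finset.univ.filter fun i => τ ≤ z i))
      MeasureTheory.volume 0 1 := by
  have hrep : (fun τ => f (Finset.univ.filter fun i => τ ≤ z i))
      = fun τ => ∑ S : Finset (Fin n),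
          Set.indicator {t : ℝ | Finset.univ.filter (fun i => t ≤ z i) = S} (fun _ => f S) τ := by
    funext τ
    rw [Finset.sum_eq_single (Finset.univ.filter fun i => τ ≤ z i)]
    · rw [Set.indicator_of_mem]
      exact rfl
    · intro S _ hS
      exact Set.indicator_of_notMem (fun h => hS (Eq.symm h)) _
    · intro h
      exact absurd (Finset.mem_univ _) h
  rw [hrep]
  have h := IntervalIntegrable.sum (μ := MeasureTheory.volume) (a := (0:ℝ)) (b := 1)
    (Finset.univ : Finset (Finset (Fin n)))
    (f := fun S => Set.indicator {t : ℝ | Finset.univ.filter (fun i => t ≤ z i) = S}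
      (fun _ => f S))
    (fun S _ => intervalIntegrable_indicator_const (measurable_levelSet z S) (f S))
  have h2 : (∑ S : Finset (Fin n), Set.indicator
      {t : ℝ | Finset.univ.filter (fun i => t ≤ z i) = S} (fun _ => f S))
      = fun τ => ∑ S : Finset (Fin n), Set.indicator
        {t : ℝ | Finset.univ.filter (fun i => t ≤ z i) = S} (fun _ => f S) τ := by
    funext τ; simp [Finset.sum_apply]
  rwa [h2] at h

lemma intervalIntegrable_G (c : ℝ) (g : Fin n → ℝ) (z : Fin n → ℝ) :
    IntervalIntegrable (fun τ => c + ∑ j : Fin n,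
      Set.indicator {t : ℝ | t ≤ z j} (fun _ => g j) τ) MeasureTheory.volume 0 1 := by
  apply IntervalIntegrable.add intervalIntegrable_const
  have h := IntervalIntegrable.sum (μ := MeasureTheory.volume) (a := (0:ℝ)) (b := 1)
    (Finset.univ : Finset (Fin n))
    (f := fun j => Set.indicator {t : ℝ | t ≤ z j} (fun _ => g j))
    (fun j _ => intervalIntegrable_indicator_const measurableSet_Iic (g j))
  have h2 : (∑ j : Fin n, Set.indicator {t : ℝ | t ≤ z j} (fun _ => g j))
      = fun τ => ∑ j : Fin n, Set.indicator {t : ℝ | t ≤ z j} (fun _ => g j) τ := by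
    funext τ; simp [Finset.sum_apply]
  rwa [h2] at h

lemma integral_G (c : ℝ) (g : Fin n → ℝ) (z : Fin n → ℝ) (hz : ∀ i, z i ∈ Set.Icc (0:ℝ) 1) :
    (∫ τ in (0:ℝ)..1, (c + ∑ j : Fin n,
      Set.indicator {t : ℝ | t ≤ z j} (fun _ => g j) τ))
      = c + ∑ j, g j * z j := by
  rw [intervalIntegral.integral_add intervalIntegrable_const
    (by
      have h := IntervalIntegrable.sum (μ := MeasureTheory.volume) (a := (0:ℝ)) (b := 1)
        (Finset.univ : Finset (Fin n))
        (f := fun j => Set.indicator {t : ℝ | t ≤ z j} (fun _ => g j))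
        (fun j _ => intervalIntegrable_indicator_const measurableSet_Iic (g j))
      have h2 : (∑ j : Fin n, Set.indicator {t : ℝ | t ≤ z j} (fun _ => g j))
          = fun τ => ∑ j : Fin n, Set.indicator {t : ℝ | t ≤ z j} (fun _ => g j) τ := by
        funext τ; simp [Finset.sum_apply]
      rwa [h2] at h),
    intervalIntegral.integral_finset_sum
      (f := fun (j : Fin n) τ => Set.indicator {t : ℝ | t ≤ z j} (fun _ => g j) τ)
      (fun j _ => intervalIntegrable_indicator_const measurableSet_Iic (g j)),
    intervalIntegral.integral_const]
  have hj : ∀ j : Fin n,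
      (∫ τ in (0:ℝ)..1, Set.indicator {t : ℝ | t ≤ z j} (fun _ => g j) τ) = g j * z j := by
    intro j
    rw [intervalIntegral.integral_indicator (hz j), intervalIntegral.integral_const]
    simp [mul_comm]
  rw [Finset.sum_congr rfl (fun j _ => hj j)]
  simp

end intpart


lemma ind_sum {n : ℕ} (g : Fin n → ℝ) (z : Fin n → ℝ) (τ : ℝ) :
    ∑ j : Fin n, Set.indicator {t : ℝ | t ≤ z j} (fun _ => g j) τ
      = ∑ j ∈ Finset.univ.filter (fun i => τ ≤ z i), g j := by
  rw [Finset.sum_filter]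
  exact Finset.sum_congr rfl (fun j _ => by
    rw [Set.indicator_apply]
    rfl)

/-- The greedy vector of a submodular function at a sorting permutation for `x` is a
subgradient of the Lovasz extension at `x`. -/
theorem stmt1 {n : ℕ} (hn : 1 ≤ n) (f : Finset (Fin n) → ℝ) (hf : Submodular f)
    (x : Fin n → ℝ) (hx : ∀ i, x i ∈ Set.Icc (0:ℝ) 1)
    (π : Equiv.Perm (Fin n))
    (hπ : ∀ j k, π j ≤ π k → x k ≤ x j)
    (g : Fin n → ℝ)
    (hg : ∀ j, g j = f (chainSet π ((π j : ℕ) + 1)) - f (chainSet π (π j : ℕ)))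
    (y : Fin n → ℝ) (hy : ∀ i, y i ∈ Set.Icc (0:ℝ) 1) :
    lovasz f x + ∑ j, g j * (y j - x j) ≤ lovasz f y := by
  -- evaluate lovasz at x
  have hFx : ∀ τ : ℝ, f (Finset.univ.filter fun i => τ ≤ x i)
      = f ∅ + ∑ j : Fin n, Set.indicator {t : ℝ | t ≤ x j} (fun _ => g j) τ := by
    intro τ
    have hdc : ∀ j ∈ Finset.univ.filter (fun i => τ ≤ x i), ∀ i, π i ≤ π j →
        i ∈ Finset.univ.filter (fun i => τ ≤ x i) := by
      intro j hj i hle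
      simp only [Finset.mem_filter, Finset.mem_univ, true_and] at hj ⊢
      exact le_trans hj (hπ i j hle)
    rw [← sum_g_eq hg (Finset.univ.filter fun i => τ ≤ x i) hdc, ind_sum]
  have hx_eval : lovasz f x = f ∅ + ∑ j, g j * x j := by
    have hcg := intervalIntegral.integral_congr (a := (0:ℝ)) (b := 1)
      (μ := MeasureTheory.volume)
      (f := fun τ => f (Finset.univ.filter fun i => τ ≤ x i))
      (g := fun τ => f ∅ + ∑ j : Fin n, Set.indicator {t : ℝ | t ≤ x j} (fun _ => g j) τ)
      (fun τ _ => hFx τ)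
    rw [lovasz, hcg, integral_G (f ∅) g x hx]
  have hy_ge : f ∅ + ∑ j, g j * y j ≤ lovasz f y := by
    rw [← integral_G (f ∅) g y hy, lovasz]
    apply intervalIntegral.integral_mono_on (by norm_num)
      (intervalIntegrable_G (f ∅) g y) (intervalIntegrable_F f y)
    intro τ _
    rw [ind_sum]
    exact sum_g_le hf hg _
  have hsum : ∑ j, g j * x j + ∑ j, g j * (y j - x j) = ∑ j, g j * y j := by
    rw [← Finset.sum_add_distrib]
    exact Finset.sum_congr rfl (fun j _ => by ring)
  rw [hx_eval]
  linarith
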